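/- Let U ⊆ ℝ³ be open, α ∈ ℝ, and let ℰ : U → ℂ be a C² function with 1 + ℰ nowhere zero. Set Λ := (e^{iα}/2)(1 − ℰ) and N := −|Λ|² − Re(ℰ), and assume N is nowhere zero. Then the pair of Ernst equations N·Δℰ = −⟨∇ℰ, ∇ℰ + 2Λ̄∇Λ⟩ and N·ΔΛ = −⟨∇Λ, ∇ℰ + 2Λ̄∇Λ⟩ (with the flat Laplacian Δ and flat bilinear—not Hermitian—inner product ⟨·,·⟩ on gradients) holds if and only if the single equation Δ( (1 + ℰ)⁻¹ ) = 0 holds on U. -/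

import Mathlib

open Complex

/-- `i`-th partial derivative of a map on `ℝⁿ`. -/
noncomputable def pd {n : ℕ} {E : Type*} [NormedAddCommGroup E] [NormedSpace ℝ E]
    (f : (Fin n → ℝ) → E) (i : Fin n) (x : Fin n → ℝ) : E :=
  fderiv ℝ f x (Pi.single i 1)

/-- Flat Laplacian of a map on `ℝⁿ`. -/
noncomputable def lap {n : ℕ} {E : Type*} [NormedAddCommGroup E] [NormedSpace ℝ E]
    (f : (Fin n → ℝ) → E) (x : Fin n → ℝ) : E :=
  ∑ i, pd (pd f i) i x

lemma pd_congr_nhds {n : ℕ} {f g : (Fin n → ℝ) → ℂ} {x : Fin n → ℝ}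
    (h : f =ᶠ[nhds x] g) (i : Fin n) : pd f i x = pd g i x := by
  unfold pd; rw [h.fderiv_eq]

lemma pd_of_hasFDerivAt {n : ℕ} {f : (Fin n → ℝ) → ℂ} {x : Fin n → ℝ}
    {L : (Fin n → ℝ) →L[ℝ] ℂ} (h : HasFDerivAt f L x) (i : Fin n) :
    pd f i x = L (Pi.single i 1) := by
  unfold pd; rw [h.fderiv]

/-- Under the Israel–Wilson–Perjés ansatz `Λ = (e^{iα}/2)(1 − ℰ)`,
`N = −|Λ|² − Re ℰ`, the pair of Ernst equations holds on `U` if and only if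
`(1 + ℰ)⁻¹` is harmonic on `U`. -/
theorem iwp_ernst_reduction (U : Set (Fin 3 → ℝ)) (hU : IsOpen U) (α : ℝ)
    (ℰ : (Fin 3 → ℝ) → ℂ)
    (hℰC2 : ContDiffOn ℝ 2 ℰ U)
    (hℰne : ∀ x ∈ U, 1 + ℰ x ≠ 0)
    (Λ : (Fin 3 → ℝ) → ℂ)
    (hΛ : Λ = fun x => (Complex.exp (Complex.I * α) / 2) * (1 - ℰ x))
    (N : (Fin 3 → ℝ) → ℝ)
    (hN : N = fun x => -Complex.normSq (Λ x) - (ℰ x).re)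
    (hNne : ∀ x ∈ U, N x ≠ 0) :
    ((∀ x ∈ U,
        (N x : ℂ) * lap ℰ x =
          -∑ i, pd ℰ i x * (pd ℰ i x + 2 * (starRingEnd ℂ) (Λ x) * pd Λ i x)) ∧
      (∀ x ∈ U,
        (N x : ℂ) * lap Λ x =
          -∑ i, pd Λ i x * (pd ℰ i x + 2 * (starRingEnd ℂ) (Λ x) * pd Λ i x)))
    ↔ (∀ x ∈ U, lap (fun y => (1 + ℰ y)⁻¹) x = 0) := by
  set c : ℂ := Complex.exp (Complex.I * α) / 2 with hc_def
  have hc : c ≠ 0 := div_ne_zero (Complex.exp_ne_zero _) two_ne_zero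
  have hcc : (starRingEnd ℂ) c * c = 1 / 4 := by
    have h1 : Complex.exp (-(Complex.I * α)) * Complex.exp (Complex.I * α) = 1 := by
      rw [← Complex.exp_add]; simp
    have h2 : (starRingEnd ℂ) (Complex.exp (Complex.I * α)) =
        Complex.exp (-(Complex.I * α)) := by
      rw [← Complex.exp_conj]; simp
    rw [hc_def, map_div₀, h2, map_ofNat, div_mul_div_comm, h1]
    norm_num
  -- differentiability
  have hEdiff : ∀ y ∈ U, DifferentiableAt ℝ ℰ y := fun y hy =>
    (hℰC2.differentiableOn (by norm_num)).differentiableAt (hU.mem_nhds hy)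
  have hD1 : ContDiffOn ℝ 1 (fderiv ℝ ℰ) U := hℰC2.fderiv_of_isOpen hU (by norm_num)
  have hpdEdiff : ∀ (i : Fin 3), ∀ y ∈ U, DifferentiableAt ℝ (pd ℰ i) y := by
    intro i y hy
    have h1 : DifferentiableAt ℝ (fderiv ℝ ℰ) y :=
      (hD1.differentiableOn (by norm_num)).differentiableAt (hU.mem_nhds hy)
    exact h1.clm_apply (differentiableAt_const _)
  -- first derivatives of Λ
  have hΛpd : ∀ (i : Fin 3), ∀ y ∈ U, pd Λ i y = -c * pd ℰ i y := by
    intro i y hy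
    have h : HasFDerivAt Λ (c • (-(fderiv ℝ ℰ y))) y := by
      rw [hΛ]
      exact ((hEdiff y hy).hasFDerivAt.const_sub 1).const_mul c
    rw [pd_of_hasFDerivAt h i]
    simp [pd]
  -- first derivatives of (1+ℰ)⁻¹
  have hgd : ∀ y ∈ U, HasFDerivAt (fun z => (1 + ℰ z)⁻¹)
      (((-ContinuousLinearMap.mulLeftRight ℝ ℂ (1 + ℰ y)⁻¹ (1 + ℰ y)⁻¹)).comp
        (fderiv ℝ ℰ y)) y := fun y hy =>
    (hasFDerivAt_inv' (𝕜 := ℝ) (hℰne y hy)).comp y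
      ((hEdiff y hy).hasFDerivAt.const_add 1)
  have hgpd : ∀ (i : Fin 3), ∀ y ∈ U, pd (fun z => (1 + ℰ z)⁻¹) i y =
      -((1 + ℰ y)⁻¹ * (1 + ℰ y)⁻¹) * pd ℰ i y := by
    intro i y hy
    rw [pd_of_hasFDerivAt (hgd y hy) i]
    simp [pd, ContinuousLinearMap.mulLeftRight_apply]
    ring
  -- second derivatives of Λ
  have hΛ2 : ∀ (i : Fin 3), ∀ x ∈ U, pd (pd Λ i) i x = -c * pd (pd ℰ i) i x := by
    intro i x hx
    have hev : pd Λ i =ᶠ[nhds x] (fun y => -c * pd ℰ i y) :=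
      Filter.eventuallyEq_of_mem (hU.mem_nhds hx) (fun y hy => hΛpd i y hy)
    rw [pd_congr_nhds hev i,
      pd_of_hasFDerivAt ((hpdEdiff i x hx).hasFDerivAt.const_mul (-c)) i]
    simp [pd]
  -- second derivatives of (1+ℰ)⁻¹
  have hg2 : ∀ (i : Fin 3), ∀ x ∈ U, pd (pd (fun z => (1 + ℰ z)⁻¹) i) i x =
      -((1 + ℰ x)⁻¹ * (1 + ℰ x)⁻¹) * pd (pd ℰ i) i x +
        2 * ((1 + ℰ x)⁻¹ * (1 + ℰ x)⁻¹ * (1 + ℰ x)⁻¹) * (pd ℰ i x * pd ℰ i x) := by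
    intro i x hx
    have hev : pd (fun z => (1 + ℰ z)⁻¹) i =ᶠ[nhds x]
        (fun y => -((1 + ℰ y)⁻¹ * (1 + ℰ y)⁻¹) * pd ℰ i y) :=
      Filter.eventuallyEq_of_mem (hU.mem_nhds hx) (fun y hy => hgpd i y hy)
    rw [pd_congr_nhds hev i]
    have hg := hgd x hx
    have h1 : HasFDerivAt (fun y => -((1 + ℰ y)⁻¹ * (1 + ℰ y)⁻¹))
        (-((1 + ℰ x)⁻¹ •
            ((-ContinuousLinearMap.mulLeftRight ℝ ℂ (1 + ℰ x)⁻¹ (1 + ℰ x)⁻¹).comp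
              (fderiv ℝ ℰ x)) +
          (1 + ℰ x)⁻¹ •
            ((-ContinuousLinearMap.mulLeftRight ℝ ℂ (1 + ℰ x)⁻¹ (1 + ℰ x)⁻¹).comp
              (fderiv ℝ ℰ x)))) x := (hg.mul hg).neg
    have h2 := h1.mul (hpdEdiff i x hx).hasFDerivAt
    rw [pd_of_hasFDerivAt (f := fun y => -((1 + ℰ y)⁻¹ * (1 + ℰ y)⁻¹) * pd ℰ i y) h2 i]
    simp [pd, ContinuousLinearMap.mulLeftRight_apply]
    ring
  -- conjugate of Λ
  have hconjΛ : ∀ x, (starRingEnd ℂ) (Λ x) =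
      (starRingEnd ℂ) c * (1 - (starRingEnd ℂ) (ℰ x)) := by
    intro x; rw [hΛ]; simp
  -- N as a complex number
  have hNC : ∀ x, (N x : ℂ) = -((1 + ℰ x) * (1 + (starRingEnd ℂ) (ℰ x))) / 4 := by
    intro x
    have h1 : ((Complex.normSq (Λ x) : ℝ) : ℂ) = Λ x * (starRingEnd ℂ) (Λ x) :=
      (Complex.mul_conj _).symm
    have h2 : (((ℰ x).re : ℝ) : ℂ) = (ℰ x + (starRingEnd ℂ) (ℰ x)) / 2 := by
      rw [eq_div_iff (by norm_num : (2:ℂ) ≠ 0), Complex.add_conj]; push_cast; ring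
    rw [hN]
    push_cast
    rw [h1, h2, hconjΛ, hΛ]
    simp only
    linear_combination (-(1 - ℰ x) * (1 - (starRingEnd ℂ) (ℰ x))) * hcc
  -- the key pointwise reduction
  have hkey1 : ∀ x ∈ U,
      (((N x : ℂ) * lap ℰ x =
        -∑ i, pd ℰ i x * (pd ℰ i x + 2 * (starRingEnd ℂ) (Λ x) * pd Λ i x)) ↔
      (1 + ℰ x) * lap ℰ x = 2 * ∑ i, pd ℰ i x * pd ℰ i x) := by
    intro x hx
    have hac : (1 + (starRingEnd ℂ) (ℰ x)) ≠ 0 := by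
      intro h
      apply hℰne x hx
      have := congrArg (starRingEnd ℂ) h
      simpa using this
    have hsum : ∑ i, pd ℰ i x * (pd ℰ i x + 2 * (starRingEnd ℂ) (Λ x) * pd Λ i x) =
        ((1 + (starRingEnd ℂ) (ℰ x)) / 2) * ∑ i, pd ℰ i x * pd ℰ i x := by
      rw [Finset.mul_sum]
      refine Finset.sum_congr rfl fun i _ => ?_
      rw [hΛpd i x hx, hconjΛ]
      linear_combination (-2 * (1 - (starRingEnd ℂ) (ℰ x)) * (pd ℰ i x * pd ℰ i x)) * hcc
    rw [hsum, hNC]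
    constructor
    · intro h
      apply mul_left_cancel₀ hac
      linear_combination (-4) * h
    · intro h
      linear_combination (-(1 + (starRingEnd ℂ) (ℰ x)) / 4) * h
  have hlapΛ : ∀ x ∈ U, lap Λ x = -c * lap ℰ x := by
    intro x hx
    unfold lap
    rw [Finset.mul_sum]
    exact Finset.sum_congr rfl fun i _ => hΛ2 i x hx
  have hkey2 : ∀ x ∈ U,
      ((1 + ℰ x) * lap ℰ x = 2 * ∑ i, pd ℰ i x * pd ℰ i x) →
      ((N x : ℂ) * lap Λ x =
        -∑ i, pd Λ i x * (pd ℰ i x + 2 * (starRingEnd ℂ) (Λ x) * pd Λ i x)) := by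
    intro x hx h
    have hsum : ∑ i, pd Λ i x * (pd ℰ i x + 2 * (starRingEnd ℂ) (Λ x) * pd Λ i x) =
        (-c * ((1 + (starRingEnd ℂ) (ℰ x)) / 2)) * ∑ i, pd ℰ i x * pd ℰ i x := by
      rw [Finset.mul_sum]
      refine Finset.sum_congr rfl fun i _ => ?_
      rw [hΛpd i x hx, hconjΛ]
      linear_combination (2 * c * (1 - (starRingEnd ℂ) (ℰ x)) * (pd ℰ i x * pd ℰ i x)) * hcc
    rw [hsum, hNC, hlapΛ x hx]
    linear_combination (c * (1 + (starRingEnd ℂ) (ℰ x)) / 4) * h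
  have hkey3 : ∀ x ∈ U,
      ((lap (fun y => (1 + ℰ y)⁻¹) x = 0) ↔
      (1 + ℰ x) * lap ℰ x = 2 * ∑ i, pd ℰ i x * pd ℰ i x) := by
    intro x hx
    have ha := hℰne x hx
    have hlapg : lap (fun y => (1 + ℰ y)⁻¹) x =
        -((1 + ℰ x)⁻¹ * (1 + ℰ x)⁻¹) * lap ℰ x +
          2 * ((1 + ℰ x)⁻¹ * (1 + ℰ x)⁻¹ * (1 + ℰ x)⁻¹) *
            ∑ i, pd ℰ i x * pd ℰ i x := by
      unfold lap
      calc (∑ i, pd (pd (fun y => (1 + ℰ y)⁻¹) i) i x)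
          = ∑ i, (-((1 + ℰ x)⁻¹ * (1 + ℰ x)⁻¹) * pd (pd ℰ i) i x +
              2 * ((1 + ℰ x)⁻¹ * (1 + ℰ x)⁻¹ * (1 + ℰ x)⁻¹) * (pd ℰ i x * pd ℰ i x)) :=
            Finset.sum_congr rfl fun i _ => hg2 i x hx
        _ = _ := by rw [Finset.sum_add_distrib, ← Finset.mul_sum, ← Finset.mul_sum]
    have hinv : (1 + ℰ x) * (1 + ℰ x)⁻¹ = 1 := mul_inv_cancel₀ ha
    rw [hlapg]
    constructor
    · intro h
      linear_combination (-(1 + ℰ x) ^ 3) * h +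
        (-(1 + ℰ x) * lap ℰ x * ((1 + ℰ x) * (1 + ℰ x)⁻¹ + 1) +
          2 * (∑ i, pd ℰ i x * pd ℰ i x) *
            (((1 + ℰ x) * (1 + ℰ x)⁻¹) ^ 2 + (1 + ℰ x) * (1 + ℰ x)⁻¹ + 1)) * hinv
    · intro h
      linear_combination (-((1 + ℰ x)⁻¹) ^ 3) * h +
        (((1 + ℰ x)⁻¹) ^ 2 * lap ℰ x) * hinv
  constructor
  · rintro ⟨h1, _⟩ x hx
    exact (hkey3 x hx).2 ((hkey1 x hx).1 (h1 x hx))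
  · intro h
    refine ⟨fun x hx => (hkey1 x hx).2 ((hkey3 x hx).1 (h x hx)),
      fun x hx => hkey2 x hx ((hkey3 x hx).1 (h x hx))⟩
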